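/- Let z ∈ ℂ with |Re(z)| ≥ 1/2 and let y ∈ ℝ. Then |z|² / |z² + y²|² ≤ 4. -/

import Mathlib

theorem stmt_0 (z : ℂ) (y : ℝ) (hz : 1 / 2 ≤ |z.re|) :
    ‖z‖ ^ 2 / ‖z ^ 2 + (y : ℂ) ^ 2‖ ^ 2 ≤ 4 := by
  have hfact : z ^ 2 + (y:ℂ)^2 = (z + y*Complex.I) * (z - y*Complex.I) := by
    linear_combination (y:ℂ)^2 * Complex.I_sq
  rw [hfact, norm_mul]
  set A := ‖z + y*Complex.I‖ with hA
  set B := ‖z - y*Complex.I‖ with hB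
  have hA0 : 0 ≤ A := norm_nonneg _
  have hB0 : 0 ≤ B := norm_nonneg _
  have hz0 : 0 ≤ ‖z‖ := norm_nonneg _
  have hAre : |z.re| ≤ A := by
    have := Complex.abs_re_le_norm (z + y*Complex.I)
    simpa using this
  have hBre : |z.re| ≤ B := by
    have := Complex.abs_re_le_norm (z - y*Complex.I)
    simpa using this
  have hsum : 2 * ‖z‖ ^ 2 ≤ A ^ 2 + B ^ 2 := by
    rw [hA, hB, Complex.sq_norm, Complex.sq_norm, Complex.sq_norm]
    simp [Complex.normSq_apply]
    nlinarith [sq_nonneg y]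
  have hkey : ‖z‖ / 2 ≤ A * B := by
    rcases le_total A B with h | h
    · nlinarith [sq_nonneg (B - ‖z‖)]
    · nlinarith [sq_nonneg (A - ‖z‖)]
  have hA2 : (1:ℝ)/2 ≤ A := le_trans hz hAre
  have hB2 : (1:ℝ)/2 ≤ B := le_trans hz hBre
  have hAB : (1:ℝ)/4 ≤ A * B := by nlinarith
  have hpos : 0 < (A*B)^2 := by nlinarith
  rw [div_le_iff₀ hpos]
  nlinarith
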